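/- (Fannes-type continuity bound for von Neumann entropy.) Let d ≥ 1 and let ρ and σ be d×d density matrices. Let ε be a real number with 0 < ε ≤ e/√d, and suppose ‖ρ - σ‖ ≤ ε in the Frobenius norm. Then |S(ρ) - S(σ)| ≤ d·(2√d·ε - √d·ε·ln(√d·ε)). -/

import Mathlib

open Matrix
open scoped ComplexOrder

/-- The Frobenius (Hilbert–Schmidt) norm of a complex matrix. -/
noncomputable def frobNorm {d : ℕ} (M : Matrix (Fin d) (Fin d) ℂ) : ℝ :=
  Real.sqrt ((Mᴴ * M).trace.re)

/-- The von Neumann entropy of a Hermitian matrix: `S(ρ) = ∑ₖ -λₖ ln λₖ` where the `λₖ`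
are the real eigenvalues (counted with multiplicity), with the convention `0 ln 0 = 0`.
For non-Hermitian matrices the value is defined to be `0`. -/
noncomputable def vnEntropy {d : ℕ} (ρ : Matrix (Fin d) (Fin d) ℂ) : ℝ :=
  if h : ρ.IsHermitian then ∑ k, Real.negMulLog (h.eigenvalues k) else 0

section RealLemmas
open Real

lemma etaL1 {x y : ℝ} (hy : 0 ≤ y) (hyx : y ≤ x) :
    negMulLog x - negMulLog y ≤ negMulLog (x - y) := by
  rcases eq_or_lt_of_le hy with h0 | hy0
  · simp [← h0]
  rcases eq_or_lt_of_le hyx with h1 | hxy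
  · simp [← h1]
  have hx : 0 < x := lt_trans hy0 hxy
  have hδ : 0 < x - y := by linarith
  have h1 : -(y * Real.log x) ≤ -(y * Real.log y) := by
    have := Real.log_le_log hy0 hyx
    nlinarith
  have h2 : -((x - y) * Real.log x) ≤ -((x - y) * Real.log (x - y)) := by
    have := Real.log_le_log hδ (by linarith : x - y ≤ x)
    nlinarith
  simp only [negMulLog]
  nlinarith

lemma etaL2 {x y : ℝ} (hy : 0 ≤ y) (hyx : y ≤ x) (hx1 : x ≤ 1) :
    negMulLog y - negMulLog x ≤ x - y := by
  rcases eq_or_lt_of_le hy with h0 | hy0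
  · have hx0 : 0 ≤ x := le_trans hy hyx
    rcases eq_or_lt_of_le hx0 with h1 | hx0'
    · simp [← h0, ← h1]
    · have : Real.log x ≤ 0 := Real.log_nonpos (le_of_lt hx0') hx1
      simp only [negMulLog, ← h0]
      nlinarith
  · have hx0 : 0 < x := lt_of_lt_of_le hy0 hyx
    have hlx : Real.log x ≤ 0 := Real.log_nonpos (le_of_lt hx0) hx1
    have hq : Real.log (x / y) ≤ x / y - 1 := Real.log_le_sub_one_of_pos (by positivity)
    have hsplit : Real.log x = Real.log (x/y) + Real.log y := by
      rw [Real.log_div (ne_of_gt hx0) (ne_of_gt hy0)]; ring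
    have : y * Real.log (x / y) ≤ x - y := by
      have := mul_le_mul_of_nonneg_left hq hy
      calc y * Real.log (x/y) ≤ y * (x/y - 1) := this
        _ = x - y := by field_simp
    simp only [negMulLog]
    nlinarith

lemma etaL3 {x : ℝ} (hx : 0 ≤ x) : negMulLog x ≤ (Real.exp 1)⁻¹ := by
  rcases eq_or_lt_of_le hx with h0 | hx0
  · simp [← h0]; positivity
  have h : Real.log x⁻¹ ≤ x⁻¹ * (Real.exp 1)⁻¹ := by
    have h2 : Real.log (x⁻¹ / Real.exp 1) ≤ x⁻¹ / Real.exp 1 - 1 :=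
      Real.log_le_sub_one_of_pos (by positivity)
    rw [Real.log_div (by positivity) (by positivity), Real.log_exp] at h2
    rw [div_eq_mul_inv] at h2; linarith
  have := mul_le_mul_of_nonneg_left h (le_of_lt hx0)
  rw [Real.log_inv] at this
  simp only [negMulLog]
  calc -x * Real.log x = x * -Real.log x := by ring
    _ ≤ x * (x⁻¹ * (Real.exp 1)⁻¹) := this
    _ = (Real.exp 1)⁻¹ := by field_simp

lemma etaKey {δ t : ℝ} (hδ0 : 0 ≤ δ) (hδ1 : δ ≤ 1) (hδt : δ ≤ t)
    (ht0 : 0 < t) (hte : t ≤ Real.exp 1) :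
    negMulLog δ ≤ 2 * t + negMulLog t ∧ δ ≤ 2 * t + negMulLog t := by
  have he : (2.7 : ℝ) < Real.exp 1 := lt_trans (by norm_num) Real.exp_one_gt_d9
  have hepos : (0:ℝ) < Real.exp 1 := Real.exp_pos 1
  have hinv : (Real.exp 1)⁻¹ < 2/5 := by
    rw [inv_lt_comm₀ (by positivity) (by norm_num)]
    linarith
  rcases le_or_gt t 1 with ht1 | ht1
  · have h1 : negMulLog δ - negMulLog t ≤ t - δ := etaL2 hδ0 hδt ht1
    have h2 : 0 ≤ negMulLog t := negMulLog_nonneg (le_of_lt ht0) ht1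
    constructor <;> nlinarith
  · have h3 : negMulLog δ ≤ (Real.exp 1)⁻¹ := etaL3 hδ0
    have hkey : 1 + (Real.exp 1)⁻¹ ≤ 2 * t + negMulLog t := by
      simp only [negMulLog]
      rcases le_or_gt t (7/5) with ht75 | ht75
      · have hlt : Real.log t ≤ t - 1 := Real.log_le_sub_one_of_pos ht0
        have hlt' : Real.log t ≤ 2/5 := by linarith
        have : t * Real.log t ≤ t * (2/5) := by nlinarith
        nlinarith
      · have hlt : Real.log t ≤ 1 := by
          calc Real.log t ≤ Real.log (Real.exp 1) := Real.log_le_log ht0 hte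
            _ = 1 := Real.log_exp 1
        have : t * Real.log t ≤ t * 1 := by nlinarith
        nlinarith
    have hinv0 : (0:ℝ) ≤ (Real.exp 1)⁻¹ := by positivity
    constructor
    · linarith
    · linarith
  
lemma etaL4 {x y t : ℝ} (hx0 : 0 ≤ x) (hx1 : x ≤ 1) (hy0 : 0 ≤ y) (hy1 : y ≤ 1)
    (hd : |x - y| ≤ t) (ht0 : 0 < t) (hte : t ≤ Real.exp 1) :
    |negMulLog x - negMulLog y| ≤ 2 * t + negMulLog t := by
  have main : ∀ a b : ℝ, 0 ≤ a → a ≤ 1 → b ≤ a → 0 ≤ b → |a - b| ≤ t →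
      negMulLog a - negMulLog b ≤ 2 * t + negMulLog t ∧
      negMulLog b - negMulLog a ≤ 2 * t + negMulLog t := by
    intro a b ha0 ha1 hba hb0 hab
    have hδ0 : 0 ≤ a - b := by linarith
    have hδt : a - b ≤ t := by rw [abs_of_nonneg hδ0] at hab; exact hab
    have hδ1 : a - b ≤ 1 := by linarith
    obtain ⟨k1, k2⟩ := etaKey hδ0 hδ1 hδt ht0 hte
    constructor
    · have := etaL1 hb0 hba
      linarith
    · have := etaL2 hb0 hba ha1
      linarith
  rcases le_total y x with hyx | hxy
  · obtain ⟨k1, k2⟩ := main x y hx0 hx1 hyx hy0 hd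
    rw [abs_le]; constructor <;> linarith
  · obtain ⟨k1, k2⟩ := main y x hy0 hy1 hxy hx0 (by rwa [abs_sub_comm] at hd)
    rw [abs_le]; constructor <;> linarith

end RealLemmas

open Matrix
open scoped ComplexOrder


lemma frob_sq {d : ℕ} (M : Matrix (Fin d) (Fin d) ℂ) :
    (Mᴴ * M).trace.re = ∑ i, ∑ j, ‖M i j‖ ^ 2 := by
  simp only [Matrix.trace, Matrix.diag, Matrix.mul_apply, Matrix.conjTranspose_apply]
  rw [Complex.re_sum]
  rw [Finset.sum_comm]
  congr 1; ext i
  rw [Complex.re_sum]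
  congr 1; ext j
  rw [Complex.star_def, ← Complex.normSq_eq_conj_mul_self]
  simp [Complex.normSq_eq_norm_sq, ← Complex.ofReal_pow]

lemma frobNorm_nonneg {d : ℕ} (M : Matrix (Fin d) (Fin d) ℂ) : 0 ≤ frobNorm M :=
  Real.sqrt_nonneg _

lemma frob_sq' {d : ℕ} (M : Matrix (Fin d) (Fin d) ℂ) :
    frobNorm M ^ 2 = ∑ i, ∑ j, ‖M i j‖ ^ 2 := by
  rw [frobNorm, Real.sq_sqrt, frob_sq]
  rw [frob_sq]; positivity

open scoped InnerProductSpace in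
lemma toEuclideanLin_coord {d : ℕ} (M : Matrix (Fin d) (Fin d) ℂ) (x : EuclideanSpace ℂ (Fin d))
    (i : Fin d) : (Matrix.toEuclideanLin M x) i = ∑ j, M i j * x j := by
  rw [Matrix.toEuclideanLin_apply]
  simp [Matrix.mulVec, dotProduct]

open scoped InnerProductSpace in
lemma norm_toEuclideanLin_le {d : ℕ} (M : Matrix (Fin d) (Fin d) ℂ)
    (x : EuclideanSpace ℂ (Fin d)) :
    ‖Matrix.toEuclideanLin M x‖ ≤ frobNorm M * ‖x‖ := by
  set w : Fin d → EuclideanSpace ℂ (Fin d) := fun i => (WithLp.equiv 2 _).symm (fun j => (starRingEnd ℂ) (M i j)) with hw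
  have hcoord : ∀ i, (Matrix.toEuclideanLin M x) i = ⟪w i, x⟫_ℂ := by
    intro i
    rw [toEuclideanLin_coord]
    simp [PiLp.inner_apply, hw, RCLike.inner_apply]
    exact Finset.sum_congr rfl (fun _ _ => mul_comm _ _)
  have hwnorm : ∀ i, ‖w i‖ ^ 2 = ∑ j, ‖M i j‖ ^ 2 := by
    intro i
    rw [EuclideanSpace.norm_eq, Real.sq_sqrt (by positivity)]
    simp [hw]
  have h1 : ‖Matrix.toEuclideanLin M x‖ ^ 2 ≤ (frobNorm M * ‖x‖) ^ 2 := by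
    rw [EuclideanSpace.norm_eq, Real.sq_sqrt (by positivity)]
    have : ∀ i, ‖(Matrix.toEuclideanLin M x) i‖ ^ 2 ≤ (∑ j, ‖M i j‖ ^ 2) * ‖x‖ ^ 2 := by
      intro i
      rw [hcoord i]
      have := norm_inner_le_norm (𝕜 := ℂ) (w i) x
      calc ‖⟪w i, x⟫_ℂ‖ ^ 2 ≤ (‖w i‖ * ‖x‖) ^ 2 := by
            apply pow_le_pow_left₀ (norm_nonneg _) this
        _ = (∑ j, ‖M i j‖ ^ 2) * ‖x‖ ^ 2 := by rw [mul_pow, hwnorm i]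
    calc ∑ i, ‖(Matrix.toEuclideanLin M x) i‖ ^ 2
        ≤ ∑ i, (∑ j, ‖M i j‖ ^ 2) * ‖x‖ ^ 2 := Finset.sum_le_sum (fun i _ => this i)
      _ = (∑ i, ∑ j, ‖M i j‖ ^ 2) * ‖x‖ ^ 2 := by rw [Finset.sum_mul]
      _ = (frobNorm M * ‖x‖) ^ 2 := by rw [mul_pow, frob_sq']
  have h2 : (0:ℝ) ≤ frobNorm M * ‖x‖ := mul_nonneg (frobNorm_nonneg M) (norm_nonneg x)
  nlinarith [norm_nonneg (Matrix.toEuclideanLin M x)]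

open scoped InnerProductSpace in
lemma re_inner_toEuclideanLin_le {d : ℕ} (M : Matrix (Fin d) (Fin d) ℂ)
    (x : EuclideanSpace ℂ (Fin d)) :
    |(⟪x, Matrix.toEuclideanLin M x⟫_ℂ).re| ≤ frobNorm M * ‖x‖ ^ 2 := by
  calc |(⟪x, Matrix.toEuclideanLin M x⟫_ℂ).re| ≤ ‖⟪x, Matrix.toEuclideanLin M x⟫_ℂ‖ :=
        Complex.abs_re_le_norm _
    _ ≤ ‖x‖ * ‖Matrix.toEuclideanLin M x‖ := norm_inner_le_norm _ _
    _ ≤ ‖x‖ * (frobNorm M * ‖x‖) := by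
        apply mul_le_mul_of_nonneg_left (norm_toEuclideanLin_le M x) (norm_nonneg x)
    _ = frobNorm M * ‖x‖ ^ 2 := by ring

namespace StepB
open scoped InnerProductSpace
variable {d : ℕ} {A : Matrix (Fin d) (Fin d) ℂ} (hA : A.IsHermitian)

lemma eigen_apply (j : Fin d) :
    Matrix.toEuclideanLin A (hA.eigenvectorBasis j) = hA.eigenvalues j • hA.eigenvectorBasis j := by
  apply PiLp.ext
  intro i
  have h := congrFun (hA.mulVec_eigenvectorBasis j) i
  rw [toEuclideanLin_coord]
  simpa [Matrix.mulVec, dotProduct] using h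

lemma inner_self_eq (x : EuclideanSpace ℂ (Fin d)) :
    (⟪x, Matrix.toEuclideanLin A x⟫_ℂ).re
      = ∑ i, hA.eigenvalues i * ‖hA.eigenvectorBasis.repr x i‖ ^ 2 := by
  set u := hA.eigenvectorBasis with hu
  set c : Fin d → ℂ := fun i => u.repr x i with hc
  have hx : ∑ i, c i • u i = x := u.sum_repr x
  have : ⟪x, Matrix.toEuclideanLin A x⟫_ℂ = ∑ i, (c i * (hA.eigenvalues i : ℂ)) * ⟪x, u i⟫_ℂ := by
    conv_lhs => rw [← hx]
    rw [map_sum, inner_sum]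
    congr 1; ext i
    rw [hx]
    rw [_root_.map_smul, eigen_apply hA i, inner_smul_right, inner_smul_right_eq_smul, ← hu]
    rw [Complex.real_smul]
    ring
  rw [this, Complex.re_sum]
  congr 1; ext i
  have h1 : ⟪x, u i⟫_ℂ = (starRingEnd ℂ) (c i) := by
    rw [← inner_conj_symm, hc]
    simp [u.repr_apply_apply]
  rw [h1]
  have : c i * (hA.eigenvalues i : ℂ) * (starRingEnd ℂ) (c i)
      = (hA.eigenvalues i : ℂ) * (c i * (starRingEnd ℂ) (c i)) := by ring
  rw [this, Complex.mul_conj]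
  rw [← Complex.ofReal_mul]
  rw [Complex.ofReal_re]
  simp [Complex.normSq_eq_norm_sq, hc]

lemma norm_sq_eq (x : EuclideanSpace ℂ (Fin d)) :
    ‖x‖ ^ 2 = ∑ i, ‖hA.eigenvectorBasis.repr x i‖ ^ 2 := by
  rw [← hA.eigenvectorBasis.repr.norm_map x]
  rw [EuclideanSpace.norm_eq, Real.sq_sqrt (by positivity)]

lemma coords_vanish (s : Finset (Fin d)) (x : EuclideanSpace ℂ (Fin d))
    (hx : x ∈ Submodule.span ℂ (⇑hA.eigenvectorBasis '' ↑s)) (i : Fin d) (hi : i ∉ s) :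
    hA.eigenvectorBasis.repr x i = 0 := by
  rw [hA.eigenvectorBasis.repr_apply_apply]
  induction hx using Submodule.span_induction with
  | mem y hy =>
      obtain ⟨j, hj, rfl⟩ := hy
      have hij : i ≠ j := fun h => hi (h ▸ hj)
      exact hA.eigenvectorBasis.orthonormal.2 hij
  | zero => exact inner_zero_right _
  | add y z _ _ hy hz => rw [inner_add_right, hy, hz, add_zero]
  | smul a y _ hy => rw [inner_smul_right, hy, mul_zero]

lemma rayleigh_upper (s : Finset (Fin d)) (Mx : ℝ)
    (hs : ∀ i ∈ s, hA.eigenvalues i ≤ Mx) (x : EuclideanSpace ℂ (Fin d))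
    (hx : x ∈ Submodule.span ℂ (⇑hA.eigenvectorBasis '' ↑s)) :
    (⟪x, Matrix.toEuclideanLin A x⟫_ℂ).re ≤ Mx * ‖x‖ ^ 2 := by
  rw [inner_self_eq hA, norm_sq_eq hA, Finset.mul_sum]
  apply Finset.sum_le_sum
  intro i _
  by_cases hi : i ∈ s
  · exact mul_le_mul_of_nonneg_right (hs i hi) (by positivity)
  · rw [coords_vanish hA s x hx i hi]; simp

lemma rayleigh_lower (s : Finset (Fin d)) (mx : ℝ)
    (hs : ∀ i ∈ s, mx ≤ hA.eigenvalues i) (x : EuclideanSpace ℂ (Fin d))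
    (hx : x ∈ Submodule.span ℂ (⇑hA.eigenvectorBasis '' ↑s)) :
    mx * ‖x‖ ^ 2 ≤ (⟪x, Matrix.toEuclideanLin A x⟫_ℂ).re := by
  rw [inner_self_eq hA, norm_sq_eq hA, Finset.mul_sum]
  apply Finset.sum_le_sum
  intro i _
  by_cases hi : i ∈ s
  · exact mul_le_mul_of_nonneg_right (hs i hi) (by positivity)
  · rw [coords_vanish hA s x hx i hi]; simp

lemma finrank_span_eigen (s : Finset (Fin d)) :
    Module.finrank ℂ (Submodule.span ℂ (⇑hA.eigenvectorBasis '' ↑s)) = s.card := by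
  have himg : ⇑hA.eigenvectorBasis '' ↑s
      = Set.range (⇑hA.eigenvectorBasis ∘ (Subtype.val : {i // i ∈ s} → Fin d)) := by
    ext y
    simp
  rw [himg, finrank_span_eq_card
    (hA.eigenvectorBasis.orthonormal.linearIndependent.comp _ Subtype.val_injective)]
  simp [Fintype.card_coe]

end StepB

namespace StepC
open scoped InnerProductSpace

noncomputable def sortedEig {d : ℕ} {A : Matrix (Fin d) (Fin d) ℂ} (hA : A.IsHermitian) :
    Fin d → ℝ := hA.eigenvalues ∘ Tuple.sort hA.eigenvalues

lemma weyl_one_side {d : ℕ} {A B : Matrix (Fin d) (Fin d) ℂ}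
    (hA : A.IsHermitian) (hB : B.IsHermitian) {ε : ℝ}
    (hC : ∀ x : EuclideanSpace ℂ (Fin d),
      |(⟪x, Matrix.toEuclideanLin (B - A) x⟫_ℂ).re| ≤ ε * ‖x‖ ^ 2)
    (k : Fin d) : sortedEig hB k ≤ sortedEig hA k + ε := by
  classical
  set πA := Tuple.sort hA.eigenvalues
  set πB := Tuple.sort hB.eigenvalues
  set sA : Finset (Fin d) := (Finset.Iic k).image πA with hsA
  set tB : Finset (Fin d) := (Finset.Ici k).image πB with htB
  have hcardA : sA.card = (k : ℕ) + 1 := by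
    rw [hsA, Finset.card_image_of_injective _ πA.injective, Fin.card_Iic]
  have hcardB : tB.card = d - (k : ℕ) := by
    rw [htB, Finset.card_image_of_injective _ πB.injective, Fin.card_Ici]
  set U := Submodule.span ℂ (⇑hA.eigenvectorBasis '' ↑sA) with hU
  set V := Submodule.span ℂ (⇑hB.eigenvectorBasis '' ↑tB) with hV
  have hfU : Module.finrank ℂ U = (k : ℕ) + 1 := by
    rw [hU, StepB.finrank_span_eigen hA sA, hcardA]
  have hfV : Module.finrank ℂ V = d - (k : ℕ) := by
    rw [hV, StepB.finrank_span_eigen hB tB, hcardB]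
  have hsum := Submodule.finrank_sup_add_finrank_inf_eq U V
  have hle : Module.finrank ℂ ↥(U ⊔ V) ≤ d := by
    have := Submodule.finrank_le (U ⊔ V)
    rwa [finrank_euclideanSpace_fin] at this
  have hpos : 0 < Module.finrank ℂ ↥(U ⊓ V) := by
    rw [hfU, hfV] at hsum
    have hk : (k : ℕ) < d := k.isLt
    omega
  have hne : U ⊓ V ≠ ⊥ := by
    intro h
    rw [h] at hpos
    simp at hpos
  obtain ⟨x, hx, hx0⟩ := Submodule.exists_mem_ne_zero_of_ne_bot hne
  have hxU : x ∈ U := hx.1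
  have hxV : x ∈ V := hx.2
  have hAbound : (⟪x, Matrix.toEuclideanLin A x⟫_ℂ).re ≤ sortedEig hA k * ‖x‖ ^ 2 := by
    apply StepB.rayleigh_upper hA sA _ _ x hxU
    intro i hi
    rw [hsA] at hi
    obtain ⟨j, hj, rfl⟩ := Finset.mem_image.mp hi
    exact Tuple.monotone_sort hA.eigenvalues (Finset.mem_Iic.mp hj)
  have hBbound : sortedEig hB k * ‖x‖ ^ 2 ≤ (⟪x, Matrix.toEuclideanLin B x⟫_ℂ).re := by
    apply StepB.rayleigh_lower hB tB _ _ x hxV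
    intro i hi
    rw [htB] at hi
    obtain ⟨j, hj, rfl⟩ := Finset.mem_image.mp hi
    exact Tuple.monotone_sort hB.eigenvalues (Finset.mem_Ici.mp hj)
  have hsplit : (⟪x, Matrix.toEuclideanLin B x⟫_ℂ).re
      = (⟪x, Matrix.toEuclideanLin A x⟫_ℂ).re + (⟪x, Matrix.toEuclideanLin (B - A) x⟫_ℂ).re := by
    have : Matrix.toEuclideanLin (B - A) = Matrix.toEuclideanLin B - Matrix.toEuclideanLin A :=
      map_sub _ _ _
    rw [this]
    simp [inner_sub_right]
  have hxnorm : 0 < ‖x‖ ^ 2 := by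
    have : 0 < ‖x‖ := norm_pos_iff.mpr hx0
    positivity
  have hCx := hC x
  have : sortedEig hB k * ‖x‖ ^ 2 ≤ (sortedEig hA k + ε) * ‖x‖ ^ 2 := by
    have h1 : (⟪x, Matrix.toEuclideanLin (B - A) x⟫_ℂ).re ≤ ε * ‖x‖ ^ 2 :=
      le_trans (le_abs_self _) hCx
    nlinarith
  exact le_of_mul_le_mul_right (by linarith [this]) hxnorm
end StepC

namespace StepD

lemma sum_eigenvalues_eq_trace {d : ℕ} {A : Matrix (Fin d) (Fin d) ℂ} (hA : A.IsHermitian) :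
    (↑(∑ i, hA.eigenvalues i) : ℂ) = A.trace := by
  conv_rhs => rw [hA.spectral_theorem, Unitary.conjStarAlgAut_apply]
  rw [Matrix.trace_mul_cycle]
  have hunit : (star (hA.eigenvectorUnitary : Matrix (Fin d) (Fin d) ℂ)) *
      (hA.eigenvectorUnitary : Matrix (Fin d) (Fin d) ℂ) = 1 := by
    exact Matrix.mem_unitaryGroup_iff'.mp hA.eigenvectorUnitary.2
  rw [hunit, Matrix.one_mul, Matrix.trace_diagonal]
  push_cast
  rfl

lemma eigenvalues_mem {d : ℕ} {A : Matrix (Fin d) (Fin d) ℂ} (hA : A.PosSemidef)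
    (htr : A.trace = 1) (i : Fin d) :
    0 ≤ hA.1.eigenvalues i ∧ hA.1.eigenvalues i ≤ 1 := by
  have hnn : ∀ j, 0 ≤ hA.1.eigenvalues j := hA.eigenvalues_nonneg
  have hsum : ∑ j, hA.1.eigenvalues j = 1 := by
    have := sum_eigenvalues_eq_trace hA.1
    rw [htr] at this
    exact_mod_cast this
  refine ⟨hnn i, ?_⟩
  calc hA.1.eigenvalues i ≤ ∑ j, hA.1.eigenvalues j :=
        Finset.single_le_sum (fun j _ => hnn j) (Finset.mem_univ i)
    _ = 1 := hsum

end StepD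


lemma frobNorm_neg {d : ℕ} (M : Matrix (Fin d) (Fin d) ℂ) : frobNorm (-M) = frobNorm M := by
  unfold frobNorm
  rw [Matrix.conjTranspose_neg, Matrix.neg_mul, Matrix.mul_neg, neg_neg]

lemma vnEntropy_eq_sorted {d : ℕ} (ρ : Matrix (Fin d) (Fin d) ℂ) (h : ρ.IsHermitian) :
    vnEntropy ρ = ∑ k, Real.negMulLog (StepC.sortedEig h k) := by
  rw [vnEntropy, dif_pos h]
  rw [StepC.sortedEig]
  exact (Equiv.sum_comp (Tuple.sort h.eigenvalues) (fun i => Real.negMulLog (h.eigenvalues i))).symm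


theorem stmt_6 (d : ℕ) (hd : 1 ≤ d) (ρ σ : Matrix (Fin d) (Fin d) ℂ)
    (hρ : ρ.PosSemidef) (hρtr : ρ.trace = 1)
    (hσ : σ.PosSemidef) (hσtr : σ.trace = 1)
    (ε : ℝ) (hε : 0 < ε) (hεd : ε ≤ Real.exp 1 / Real.sqrt d)
    (hdist : frobNorm (ρ - σ) ≤ ε) :
    |vnEntropy ρ - vnEntropy σ| ≤
      d * (2 * Real.sqrt d * ε - Real.sqrt d * ε * Real.log (Real.sqrt d * ε)) := by
  have hd0 : (0:ℝ) < d := by exact_mod_cast hd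
  have hsd : (0:ℝ) < Real.sqrt d := Real.sqrt_pos.mpr hd0
  have hsd1 : (1:ℝ) ≤ Real.sqrt d := by
    rw [show (1:ℝ) = Real.sqrt 1 by simp]
    exact Real.sqrt_le_sqrt (by exact_mod_cast hd)
  set t := Real.sqrt d * ε with ht
  have ht0 : 0 < t := by positivity
  have hεt : ε ≤ t := by nlinarith
  have hte : t ≤ Real.exp 1 := by
    rw [ht]
    calc Real.sqrt d * ε ≤ Real.sqrt d * (Real.exp 1 / Real.sqrt d) :=
          mul_le_mul_of_nonneg_left hεd (le_of_lt hsd)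
      _ = Real.exp 1 := by field_simp
  -- Weyl bound on sorted eigenvalues
  have hC1 : ∀ x : EuclideanSpace ℂ (Fin d),
      |((inner ℂ x (Matrix.toEuclideanLin (σ - ρ) x) : ℂ)).re| ≤ ε * ‖x‖ ^ 2 := by
    intro x
    calc |((inner ℂ x (Matrix.toEuclideanLin (σ - ρ) x) : ℂ)).re|
        ≤ frobNorm (σ - ρ) * ‖x‖ ^ 2 := re_inner_toEuclideanLin_le _ x
      _ ≤ ε * ‖x‖ ^ 2 := by
          apply mul_le_mul_of_nonneg_right _ (by positivity)
          rw [show σ - ρ = -(ρ - σ) from (neg_sub ρ σ).symm, frobNorm_neg]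
          exact hdist
  have hC2 : ∀ x : EuclideanSpace ℂ (Fin d),
      |((inner ℂ x (Matrix.toEuclideanLin (ρ - σ) x) : ℂ)).re| ≤ ε * ‖x‖ ^ 2 := by
    intro x
    calc |((inner ℂ x (Matrix.toEuclideanLin (ρ - σ) x) : ℂ)).re|
        ≤ frobNorm (ρ - σ) * ‖x‖ ^ 2 := re_inner_toEuclideanLin_le _ x
      _ ≤ ε * ‖x‖ ^ 2 := mul_le_mul_of_nonneg_right hdist (by positivity)
  have hweyl : ∀ k, |StepC.sortedEig hρ.1 k - StepC.sortedEig hσ.1 k| ≤ ε := by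
    intro k
    rw [abs_le]
    constructor
    · have := StepC.weyl_one_side hρ.1 hσ.1 hC1 k
      linarith
    · have := StepC.weyl_one_side hσ.1 hρ.1 hC2 k
      linarith
  have hmemρ : ∀ k, 0 ≤ StepC.sortedEig hρ.1 k ∧ StepC.sortedEig hρ.1 k ≤ 1 :=
    fun k => StepD.eigenvalues_mem hρ hρtr _
  have hmemσ : ∀ k, 0 ≤ StepC.sortedEig hσ.1 k ∧ StepC.sortedEig hσ.1 k ≤ 1 :=
    fun k => StepD.eigenvalues_mem hσ hσtr _
  rw [vnEntropy_eq_sorted ρ hρ.1, vnEntropy_eq_sorted σ hσ.1, ← Finset.sum_sub_distrib]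
  have hterm : ∀ k : Fin d, |Real.negMulLog (StepC.sortedEig hρ.1 k)
      - Real.negMulLog (StepC.sortedEig hσ.1 k)| ≤ 2 * t + Real.negMulLog t := by
    intro k
    exact etaL4 (hmemρ k).1 (hmemρ k).2 (hmemσ k).1 (hmemσ k).2
      (le_trans (hweyl k) hεt) ht0 hte
  calc |∑ k : Fin d, (Real.negMulLog (StepC.sortedEig hρ.1 k)
        - Real.negMulLog (StepC.sortedEig hσ.1 k))|
      ≤ ∑ k : Fin d, |Real.negMulLog (StepC.sortedEig hρ.1 k)
        - Real.negMulLog (StepC.sortedEig hσ.1 k)| := Finset.abs_sum_le_sum_abs _ _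
    _ ≤ ∑ _k : Fin d, (2 * t + Real.negMulLog t) := Finset.sum_le_sum (fun k _ => hterm k)
    _ = d * (2 * t + Real.negMulLog t) := by
        rw [Finset.sum_const, Finset.card_univ, Fintype.card_fin, nsmul_eq_mul]
    _ = d * (2 * Real.sqrt d * ε - Real.sqrt d * ε * Real.log (Real.sqrt d * ε)) := by
        rw [Real.negMulLog, ht]; ring
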